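/- For every fixed dimension d ≥ 2, the functions n ↦ E_d(n), n ↦ M_d(n,n), and n ↦ W_d(n) are pairwise asymptotically equivalent: there exist constants c₁, c₂ > 0 such that for all n ≥ 2, c₁·M_d(n,n) ≤ E_d(n) ≤ c₂·M_d(n,n) and c₁·M_d(n,n) ≤ W_d(n) ≤ c₂·M_d(n,n). -/

import Mathlib

open Pointwise Filter

noncomputable section

/-- A set in `ℝ^d` is convexly independent if no point of it lies in the
convex hull of the other points. -/
def ConvInd {d : ℕ} (S : Set (Fin d → ℝ)) : Prop :=
  ∀ p ∈ S, p ∉ convexHull ℝ (S \ {p})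

/-- `Efun d n` : the maximum, over `n`-point sets `P ⊂ ℝ^d`, of the number of
unordered pairs of distinct points of `P` whose midpoints are pairwise distinct
and form a convexly independent set.  Unordered pairs are encoded as ordered
pairs with the reversed pair excluded. -/
def Efun (d n : ℕ) : ℕ :=
  sSup {k | ∃ (P : Finset (Fin d → ℝ)) (T : Finset ((Fin d → ℝ) × (Fin d → ℝ))),
    P.card = n ∧
    (∀ e ∈ T, e.1 ∈ P ∧ e.2 ∈ P ∧ e.1 ≠ e.2 ∧ (e.2, e.1) ∉ T) ∧
    Set.InjOn (fun e : (Fin d → ℝ) × (Fin d → ℝ) => midpoint ℝ e.1 e.2) ↑T ∧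
    ConvInd ((fun e : (Fin d → ℝ) × (Fin d → ℝ) => midpoint ℝ e.1 e.2) '' ↑T) ∧
    T.card = k}

/-- `Mfun d m n` : the maximum, over `m`-point sets `P` and `n`-point sets `Q` in `ℝ^d`,
of the size of a convexly independent subset of the Minkowski sum `P + Q`. -/
def Mfun (d m n : ℕ) : ℕ :=
  sSup {k | ∃ P Q S : Finset (Fin d → ℝ),
    P.card = m ∧ Q.card = n ∧
    (S : Set (Fin d → ℝ)) ⊆ (P : Set (Fin d → ℝ)) + (Q : Set (Fin d → ℝ)) ∧
    ConvInd (S : Set (Fin d → ℝ)) ∧ S.card = k}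

/-- A norm on `ℝ^d` whose unit ball is strictly convex (the unit sphere contains
no nondegenerate segment, expressed via midpoints of distinct unit vectors). -/
structure StrictNorm (d : ℕ) where
  toFun : (Fin d → ℝ) → ℝ
  eq_zero_iff : ∀ x, toFun x = 0 ↔ x = 0
  smul_eq : ∀ (a : ℝ) (x : Fin d → ℝ), toFun (a • x) = |a| * toFun x
  add_le : ∀ x y, toFun (x + y) ≤ toFun x + toFun y
  strictly_convex : ∀ x y, toFun x = 1 → toFun y = 1 → x ≠ y →
    toFun ((1 / 2 : ℝ) • (x + y)) < 1

/-- A (not necessarily strictly convex) norm on `ℝ^d`. -/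
structure NormOn (d : ℕ) where
  toFun : (Fin d → ℝ) → ℝ
  eq_zero_iff : ∀ x, toFun x = 0 ↔ x = 0
  smul_eq : ∀ (a : ℝ) (x : Fin d → ℝ), toFun (a • x) = |a| * toFun x
  add_le : ∀ x y, toFun (x + y) ≤ toFun x + toFun y

/-- `Wfun d n` : the maximum, over `n`-point sets `S ⊂ ℝ^d` and strictly convex
norms on `ℝ^d`, of the number of pairwise nonparallel unit-distance pairs in `S`.
(The nonparallelity condition between distinct ordered pairs automatically rules
out listing any unordered pair twice.) -/
def Wfun (d n : ℕ) : ℕ :=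
  sSup {k | ∃ (S : Finset (Fin d → ℝ)) (ν : StrictNorm d)
      (T : Finset ((Fin d → ℝ) × (Fin d → ℝ))),
    S.card = n ∧
    (∀ e ∈ T, e.1 ∈ S ∧ e.2 ∈ S ∧ ν.toFun (e.1 - e.2) = 1) ∧
    (∀ e ∈ T, ∀ f ∈ T, e ≠ f → ∀ c : ℝ, e.1 - e.2 ≠ c • (f.1 - f.2)) ∧
    T.card = k}

/-- `Ufun d n` : the maximum, over `n`-point sets `S ⊂ ℝ^d` and strictly convex
norms on `ℝ^d`, of the number of unordered unit-distance pairs in `S`. -/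
def Ufun (d n : ℕ) : ℕ :=
  sSup {k | ∃ (S : Finset (Fin d → ℝ)) (ν : StrictNorm d)
      (T : Finset ((Fin d → ℝ) × (Fin d → ℝ))),
    S.card = n ∧
    (∀ e ∈ T, e.1 ∈ S ∧ e.2 ∈ S ∧ e.1 ≠ e.2 ∧ ν.toFun (e.1 - e.2) = 1 ∧ (e.2, e.1) ∉ T) ∧
    T.card = k}

/-- `Dfun d n` : the maximum, over `n`-point sets `S ⊂ ℝ^d` and strictly convex
norms on `ℝ^d`, of the number of unordered diameter pairs in `S` (pairs of points
whose distance equals the diameter `D` of `S` in the norm). -/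
def Dfun (d n : ℕ) : ℕ :=
  sSup {k | ∃ (S : Finset (Fin d → ℝ)) (ν : StrictNorm d)
      (T : Finset ((Fin d → ℝ) × (Fin d → ℝ))) (D : ℝ),
    S.card = n ∧
    (∀ p ∈ S, ∀ q ∈ S, ν.toFun (p - q) ≤ D) ∧
    (∃ p ∈ S, ∃ q ∈ S, ν.toFun (p - q) = D) ∧
    (∀ e ∈ T, e.1 ∈ S ∧ e.2 ∈ S ∧ e.1 ≠ e.2 ∧ ν.toFun (e.1 - e.2) = D ∧ (e.2, e.1) ∉ T) ∧
    T.card = k}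

/-- A family of sets in `ℝ^d` is strictly antipodal if for each pair of points
`p ∈ A i`, `q ∈ A j` with `i ≠ j` there is a linear functional `φ` with
`φ p < φ r < φ q` for every other point `r` of the union. -/
def StrictlyAntipodal {d : ℕ} {ι : Type*} (A : ι → Set (Fin d → ℝ)) : Prop :=
  ∀ i j, i ≠ j → ∀ p ∈ A i, ∀ q ∈ A j, ∃ φ : (Fin d → ℝ) →ₗ[ℝ] ℝ,
    ∀ r ∈ ⋃ t, A t, r ≠ p → r ≠ q → φ p < φ r ∧ φ r < φ q

/-- `aconst d` = `a(d)` : the largest `k` such that for every `m` there is a strictly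
antipodal family of `k` sets in `ℝ^d`, each of size at least `m`. -/
def aconst (d : ℕ) : ℕ :=
  sSup {k | ∀ m : ℕ, ∃ A : Fin k → Finset (Fin d → ℝ),
    (∀ i, m ≤ (A i).card) ∧ StrictlyAntipodal (fun i => ((A i : Set (Fin d → ℝ))))}

/-- The set of midpoints between points in different members of a family of finite sets. -/
def midSet {d : ℕ} {ι : Type*} (B : ι → Finset (Fin d → ℝ)) : Set (Fin d → ℝ) :=
  {x | ∃ i j, i ≠ j ∧ ∃ p ∈ B i, ∃ q ∈ B j, x = midpoint ℝ p q}

/-- The set of differences between points in different members of a family of sets. -/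
def diffSet {d : ℕ} {ι : Type*} (A : ι → Set (Fin d → ℝ)) : Set (Fin d → ℝ) :=
  {x | ∃ i j, i ≠ j ∧ ∃ p ∈ A i, ∃ q ∈ A j, x = p - q}

namespace StrictNorm
variable {d : ℕ} (ν : StrictNorm d)

lemma zero' : ν.toFun 0 = 0 := by
  have := ν.smul_eq 0 0
  simpa using this

lemma nonneg (x : Fin d → ℝ) : 0 ≤ ν.toFun x := by
  have h1 : ν.toFun ((-1 : ℝ) • x) = ν.toFun x := by rw [ν.smul_eq]; norm_num
  have h2 : ν.toFun (x + (-1 : ℝ) • x) ≤ ν.toFun x + ν.toFun ((-1 : ℝ) • x) := ν.add_le _ _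
  have h3 : x + (-1 : ℝ) • x = 0 := by module
  rw [h3, ν.zero', h1] at h2
  linarith

lemma sum_le {ι : Type*} (s : Finset ι) (f : ι → Fin d → ℝ) :
    ν.toFun (∑ i ∈ s, f i) ≤ ∑ i ∈ s, ν.toFun (f i) := by
  classical
  induction s using Finset.induction with
  | empty => simp [ν.zero']
  | insert _ _ hx ih =>
    rw [Finset.sum_insert hx, Finset.sum_insert hx]
    exact le_trans (ν.add_le _ _) (by linarith)

/-- strict convexity for general coefficients -/
lemma combo_lt (x y : Fin d → ℝ) (hx : ν.toFun x = 1) (hy : ν.toFun y = 1)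
    (hxy : x ≠ y) {α β : ℝ} (hα : 0 < α) (hβ : 0 < β) :
    ν.toFun (α • x + β • y) < α + β := by
  -- wlog α ≤ β
  wlog hle : α ≤ β generalizing x y α β
  · have := this y x hy hx (Ne.symm hxy) hβ hα (le_of_not_ge hle)
    rw [add_comm (β • y), add_comm β] at this; exact this
  have hmid := ν.strictly_convex x y hx hy hxy
  have hkey : α • x + β • y = (2 * α) • ((1 / 2 : ℝ) • (x + y)) + (β - α) • y := by module
  have h1 : ν.toFun ((2 * α) • ((1 / 2 : ℝ) • (x + y))) = (2 * α) * ν.toFun ((1 / 2 : ℝ) • (x + y)) := by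
    rw [ν.smul_eq]; rw [abs_of_pos (by linarith)]
  have h2 : ν.toFun ((β - α) • y) = (β - α) * 1 := by
    rw [ν.smul_eq, hy, abs_of_nonneg (by linarith)]
  calc ν.toFun (α • x + β • y) ≤ _ + _ := by rw [hkey]; exact ν.add_le _ _
    _ < α + β := by rw [h1, h2]; nlinarith

/-- a convex combination of unit vectors with at least two distinct support
points has norm < 1 -/
lemma convex_combo_lt (s : Finset (Fin d → ℝ)) (w : (Fin d → ℝ) → ℝ)
    (h0 : ∀ y ∈ s, 0 ≤ w y) (h1 : ∑ y ∈ s, w y = 1)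
    (hunit : ∀ y ∈ s, ν.toFun y = 1)
    (y₁ y₂ : Fin d → ℝ) (hy₁ : y₁ ∈ s) (hy₂ : y₂ ∈ s) (hne : y₁ ≠ y₂)
    (hw₁ : 0 < w y₁) (hw₂ : 0 < w y₂) :
    ν.toFun (∑ y ∈ s, w y • y) < 1 := by
  classical
  have hy₂' : y₂ ∈ s.erase y₁ := Finset.mem_erase.2 ⟨Ne.symm hne, hy₂⟩
  set t := (s.erase y₁).erase y₂ with ht
  have hsum : ∑ y ∈ s, w y • y
      = (w y₁ • y₁ + w y₂ • y₂) + ∑ y ∈ t, w y • y := by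
    rw [← Finset.add_sum_erase _ _ hy₁, ← Finset.add_sum_erase _ _ hy₂']
    abel
  have hsumw : ∑ y ∈ s, w y = (w y₁ + w y₂) + ∑ y ∈ t, w y := by
    rw [← Finset.add_sum_erase _ _ hy₁, ← Finset.add_sum_erase _ _ hy₂']
    ring
  have hA : ν.toFun (w y₁ • y₁ + w y₂ • y₂) < w y₁ + w y₂ :=
    ν.combo_lt y₁ y₂ (hunit _ hy₁) (hunit _ hy₂) hne hw₁ hw₂
  have hB : ν.toFun (∑ y ∈ t, w y • y) ≤ ∑ y ∈ t, w y := by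
    refine le_trans (ν.sum_le _ _) (Finset.sum_le_sum ?_)
    intro y hy
    have hys : y ∈ s := Finset.mem_of_mem_erase (Finset.mem_of_mem_erase hy)
    rw [ν.smul_eq, hunit _ hys, mul_one, abs_of_nonneg (h0 y hys)]
  calc ν.toFun (∑ y ∈ s, w y • y) ≤ _ + _ := by rw [hsum]; exact ν.add_le _ _
    _ < 1 := by rw [hsumw] at h1; linarith

end StrictNorm

/-- finitely many points on the unit sphere of a strictly convex norm are
convexly independent -/
lemma convInd_of_unit {d : ℕ} (ν : StrictNorm d) (D : Finset (Fin d → ℝ))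
    (hunit : ∀ y ∈ D, ν.toFun y = 1) : ConvInd (D : Set (Fin d → ℝ)) := by
  classical
  intro p hp hmem
  have hco : (↑D : Set (Fin d → ℝ)) \ {p} = ↑(D.erase p) := by
    rw [Finset.coe_erase]
  rw [hco, Finset.convexHull_eq] at hmem
  obtain ⟨w, hw0, hw1, hwc⟩ := hmem
  rw [Finset.centerMass_eq_of_sum_1 _ _ hw1] at hwc
  simp only [id] at hwc
  -- find a support point
  have hex : ∃ y₁ ∈ D.erase p, 0 < w y₁ := by
    by_contra h
    push_neg at h
    have : ∑ y ∈ D.erase p, w y = 0 :=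
      Finset.sum_eq_zero fun y hy => le_antisymm (h y hy) (hw0 y hy)
    rw [hw1] at this; norm_num at this
  obtain ⟨y₁, hy₁, hwy₁⟩ := hex
  by_cases h2 : ∃ y₂ ∈ D.erase p, 0 < w y₂ ∧ y₂ ≠ y₁
  · obtain ⟨y₂, hy₂, hwy₂, hne⟩ := h2
    have := ν.convex_combo_lt (D.erase p) w hw0 hw1
      (fun y hy => hunit y (Finset.mem_of_mem_erase hy)) y₁ y₂ hy₁ hy₂ (Ne.symm hne) hwy₁ hwy₂
    rw [hwc] at this
    rw [hunit p hp] at this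
    norm_num at this
  · push_neg at h2
    -- all weight on y₁; so p = y₁ ∈ D.erase p, contradiction
    have hw1' : w y₁ = 1 := by
      rw [← hw1]
      rw [Finset.sum_eq_single y₁]
      · intro y hy hne
        by_contra h
        have : 0 < w y := lt_of_le_of_ne (hw0 y hy) (Ne.symm h)
        exact hne (h2 y hy this)
      · intro h; exact absurd hy₁ h
    have hp' : p = y₁ := by
      rw [← hwc]
      rw [Finset.sum_eq_single y₁]
      · rw [hw1', one_smul]
      · intro y hy hne
        have : w y = 0 := by
          by_contra h
          exact hne (h2 y hy (lt_of_le_of_ne (hw0 y hy) (Ne.symm h)))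
        rw [this, zero_smul]
      · intro h; exact absurd hy₁ h
    exact (Finset.ne_of_mem_erase hy₁) hp'.symm
lemma ConvInd.mono {d : ℕ} {S S' : Set (Fin d → ℝ)} (h : ConvInd S) (hsub : S' ⊆ S) :
    ConvInd S' := by
  intro p hp hmem
  exact h p (hsub hp) (convexHull_mono (by
    intro x hx
    exact ⟨hsub hx.1, hx.2⟩) hmem)

lemma ConvInd.smul {d : ℕ} {S : Set (Fin d → ℝ)} (h : ConvInd S) {c : ℝ} (hc : c ≠ 0) :
    ConvInd ((c • ·) '' S) := by
  intro p hp hmem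
  obtain ⟨q, hq, rfl⟩ := hp
  have hinj : Function.Injective (c • · : (Fin d → ℝ) → (Fin d → ℝ)) :=
    fun a b hab => smul_right_injective _ hc hab
  have himg : ((c • ·) '' S) \ {c • q} = (c • ·) '' (S \ {q}) := by
    rw [← Set.image_singleton, ← Set.image_diff hinj]
  rw [himg, Set.image_smul, convexHull_smul] at hmem
  obtain ⟨r, hr, hrq⟩ := Set.mem_smul_set.mp hmem
  have hreq : r = q := smul_right_injective _ hc hrq
  rw [hreq] at hr
  exact h q hq hr

/-- from convex independence, get an exposing linear functional for each point -/
lemma exists_exposing {d : ℕ} (S : Finset (Fin d → ℝ)) (hS : ConvInd (S : Set (Fin d → ℝ)))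
    (p : Fin d → ℝ) (hp : p ∈ S) :
    ∃ φ : (Fin d → ℝ) →ₗ[ℝ] ℝ, ∀ r ∈ S, r ≠ p → φ r < φ p := by
  have hnotin : p ∉ convexHull ℝ ((S : Set (Fin d → ℝ)) \ {p}) := hS p hp
  have hfin : ((S : Set (Fin d → ℝ)) \ {p}).Finite := (S.finite_toSet).diff
  have hclosed : IsClosed (convexHull ℝ ((S : Set (Fin d → ℝ)) \ {p})) :=
    (hfin.isCompact_convexHull ℝ).isClosed
  obtain ⟨f, u, hfu, hux⟩ := geometric_hahn_banach_closed_point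
    (convex_convexHull ℝ _) hclosed hnotin
  refine ⟨f.toLinearMap, fun r hr hrp => ?_⟩
  have : r ∈ convexHull ℝ ((S : Set (Fin d → ℝ)) \ {p}) :=
    subset_convexHull ℝ _ ⟨hr, hrp⟩
  exact lt_trans (hfu r this) hux
section NormConstruction

variable {d : ℕ}

/-- helper: strict convexity through a linear map to an inner product space -/
lemma linmap_mid_eq {H : Type*} [NormedAddCommGroup H] [InnerProductSpace ℝ H]
    (L : (Fin d → ℝ) →ₗ[ℝ] H) (z w : Fin d → ℝ)
    (hz : ‖L z‖ = 1) (hw : ‖L w‖ = 1) (hm : ‖L ((1/2 : ℝ) • (z + w))‖ = 1) :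
    L z = L w := by
  have h2 : L ((1/2 : ℝ) • (z + w)) = (1/2 : ℝ) • (L z + L w) := by
    rw [map_smul, map_add]
  rw [h2, norm_smul] at hm
  have hsum : ‖L z + L w‖ = 2 := by
    rw [Real.norm_eq_abs] at hm
    rw [show |(1/2 : ℝ)| = 1/2 by norm_num] at hm
    linarith
  have hpar := parallelogram_law_with_norm ℝ (L z) (L w)
  rw [hsum, hz, hw] at hpar
  have : ‖L z - L w‖ * ‖L z - L w‖ = 0 := by linarith
  have : ‖L z - L w‖ = 0 := by nlinarith [norm_nonneg (L z - L w)]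
  rw [norm_sub_eq_zero_iff] at this
  exact this

lemma sq_eq_one_of_nonneg {t : ℝ} (h0 : 0 ≤ t) (h1 : t ^ 2 = 1) : t = 1 := by
  nlinarith [sq_nonneg (t - 1), sq_nonneg (t + 1)]

lemma le_one_of_sq_le_one {t : ℝ} (h0 : 0 ≤ t) (h1 : t ^ 2 ≤ 1) : t ≤ 1 := by
  nlinarith [sq_nonneg (t - 1)]

/-- the Euclidean strict norm on `ℝ^d` -/
def euclidStrictNorm (d : ℕ) : StrictNorm d where
  toFun := fun z => ‖(WithLp.equiv 2 (Fin d → ℝ)).symm z‖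
  eq_zero_iff := fun x => by
    rw [norm_eq_zero]
    constructor
    · intro h
      have := congrArg (WithLp.equiv 2 (Fin d → ℝ)) h
      simpa using this
    · intro h; rw [h]; rfl
  smul_eq := fun a x => by
    try dsimp only
    have h : (WithLp.equiv 2 (Fin d → ℝ)).symm (a • x) = a • (WithLp.equiv 2 (Fin d → ℝ)).symm x := rfl
    rw [h, norm_smul, Real.norm_eq_abs]
  add_le := fun x y => by
    try dsimp only
    have h : (WithLp.equiv 2 (Fin d → ℝ)).symm (x + y) = (WithLp.equiv 2 (Fin d → ℝ)).symm x + (WithLp.equiv 2 (Fin d → ℝ)).symm y := rfl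
    rw [h]; exact norm_add_le _ _
  strictly_convex := fun x y hx hy hxy => by
    try dsimp only at hx hy ⊢
    set L : (Fin d → ℝ) →ₗ[ℝ] EuclideanSpace ℝ (Fin d) :=
      (WithLp.linearEquiv 2 ℝ (Fin d → ℝ)).symm.toLinearMap with hL
    have hLx : ∀ z : Fin d → ℝ, L z = (WithLp.equiv 2 (Fin d → ℝ)).symm z := fun z => rfl
    rw [← hLx x] at hx
    rw [← hLx y] at hy
    rw [← hLx _]
    by_contra hcon
    push_neg at hcon
    have h1 : ‖L ((1/2 : ℝ) • (x + y))‖ = 1 := by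
      refine le_antisymm ?_ hcon
      have h2 : L ((1/2 : ℝ) • (x+y)) = (1/2 : ℝ) • (L x + L y) := by rw [map_smul, map_add]
      rw [h2, norm_smul]
      calc ‖(1/2:ℝ)‖ * ‖L x + L y‖ ≤ ‖(1/2:ℝ)‖ * (‖L x‖ + ‖L y‖) :=
            mul_le_mul_of_nonneg_left (norm_add_le _ _) (norm_nonneg _)
        _ ≤ 1 := by rw [hx, hy, Real.norm_eq_abs, abs_of_pos (by norm_num : (0:ℝ) < 1/2)]; norm_num
    have := linmap_mid_eq L x y hx hy h1
    exact hxy ((WithLp.linearEquiv 2 ℝ (Fin d → ℝ)).symm.injective this)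

end NormConstruction
section Through
variable {d : ℕ}

/-- auxiliary linear map into an L² product space -/
def Lm (ε β : ℝ) (u : (Fin d → ℝ) →ₗ[ℝ] ℝ) :
    (Fin d → ℝ) →ₗ[ℝ] WithLp 2 (EuclideanSpace ℝ (Fin d) × ℝ) :=
  (WithLp.linearEquiv 2 ℝ (EuclideanSpace ℝ (Fin d) × ℝ)).symm.toLinearMap.comp
    (LinearMap.prod
      (ε • (WithLp.linearEquiv 2 ℝ (Fin d → ℝ)).symm.toLinearMap) (β • u))

lemma Lm_fst (ε β : ℝ) (u : (Fin d → ℝ) →ₗ[ℝ] ℝ) (z : Fin d → ℝ) :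
    (Lm ε β u z).fst = (ε • ((WithLp.equiv 2 (Fin d → ℝ)).symm z) :
      EuclideanSpace ℝ (Fin d)) := rfl

lemma Lm_snd (ε β : ℝ) (u : (Fin d → ℝ) →ₗ[ℝ] ℝ) (z : Fin d → ℝ) :
    (Lm ε β u z).snd = β * u z := rfl

lemma Lm_norm_sq (ε β : ℝ) (u : (Fin d → ℝ) →ₗ[ℝ] ℝ) (z : Fin d → ℝ) :
    ‖Lm ε β u z‖ ^ 2
      = ε^2 * ‖(WithLp.equiv 2 (Fin d → ℝ)).symm z‖^2 + β^2 * (u z)^2 := by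
  rw [WithLp.prod_norm_sq_eq_of_L2, Lm_fst, Lm_snd, norm_smul, Real.norm_eq_abs,
    mul_pow, sq_abs, Real.norm_eq_abs, abs_mul, mul_pow, sq_abs, sq_abs]

lemma Lm_inj {ε : ℝ} (hε : ε ≠ 0) (β : ℝ) (u : (Fin d → ℝ) →ₗ[ℝ] ℝ)
    {z w : Fin d → ℝ} (h : Lm ε β u z = Lm ε β u w) : z = w := by
  have h1 := congrArg WithLp.fst h
  rw [Lm_fst, Lm_fst] at h1
  have h2 : (WithLp.equiv 2 (Fin d → ℝ)).symm z = (WithLp.equiv 2 (Fin d → ℝ)).symm w :=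
    smul_right_injective _ hε h1
  exact (WithLp.equiv 2 (Fin d → ℝ)).symm.injective h2

lemma e2_eq_zero {z : Fin d → ℝ}
    (h : ‖(WithLp.equiv 2 (Fin d → ℝ)).symm z‖ = 0) : z = 0 := by
  rw [norm_eq_zero] at h
  have := congrArg (WithLp.equiv 2 (Fin d → ℝ)) h
  simpa using this

/-- key construction: a strictly convex norm whose unit sphere passes through
finitely many points, given suitable exposing functionals -/
lemma exists_strictNorm_through (X : Finset (Fin d → ℝ))
    (u : (Fin d → ℝ) → ((Fin d → ℝ) →ₗ[ℝ] ℝ))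
    (hpos : ∀ s ∈ X, 0 < u s s)
    (hdom : ∀ s ∈ X, ∀ r ∈ X, r ≠ s → |u s r| < u s s) :
    ∃ ν : StrictNorm d, ∀ s ∈ X, ν.toFun s = 1 := by
  classical
  rcases X.eq_empty_or_nonempty with rfl | hne
  · exact ⟨euclidStrictNorm d, by simp⟩
  set e2 : (Fin d → ℝ) → ℝ := fun z => ‖(WithLp.equiv 2 (Fin d → ℝ)).symm z‖ with he2
  have he20 : ∀ z, 0 ≤ e2 z := fun z => norm_nonneg _
  set m : (Fin d → ℝ) → ℝ :=
    fun s => (insert (0:ℝ) ((X.erase s).image (fun r => |u s r|))).max' (by simp) with hm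
  have hm0 : ∀ s, 0 ≤ m s := fun s =>
    Finset.le_max' (insert (0:ℝ) ((X.erase s).image (fun r => |u s r|))) 0
      (Finset.mem_insert_self _ _)
  have hmge : ∀ s, ∀ r ∈ X.erase s, |u s r| ≤ m s := by
    intro s r hr
    exact Finset.le_max' (insert (0:ℝ) ((X.erase s).image (fun r => |u s r|))) (|u s r|)
      (Finset.mem_insert.2 (Or.inr (Finset.mem_image.2 ⟨r, hr, rfl⟩)))
  have hmlt : ∀ s ∈ X, m s < u s s := by
    intro s hs
    have hkey : ∀ y ∈ insert (0:ℝ) ((X.erase s).image (fun r => |u s r|)), y < u s s := by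
      intro y hy
      rcases Finset.mem_insert.1 hy with rfl | hy
      · exact hpos s hs
      · obtain ⟨r, hr, rfl⟩ := Finset.mem_image.1 hy
        exact hdom s hs r (Finset.mem_of_mem_erase hr) (Finset.ne_of_mem_erase hr)
    exact (Finset.max'_lt_iff _ (by simp)).2 hkey
  set ρ : ℝ := (insert (0:ℝ) (X.image (fun s => (m s / u s s)^2))).max' (by simp) with hρ
  have hρ0 : 0 ≤ ρ :=
    Finset.le_max' (insert (0:ℝ) (X.image (fun s => (m s / u s s)^2))) 0
      (Finset.mem_insert_self _ _)
  have hρ1 : ρ < 1 := by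
    have hkey : ∀ y ∈ insert (0:ℝ) (X.image (fun s => (m s / u s s)^2)), y < 1 := by
      intro y hy
      rcases Finset.mem_insert.1 hy with rfl | hy
      · norm_num
      · obtain ⟨s, hs, rfl⟩ := Finset.mem_image.1 hy
        have h1 := hmlt s hs; have h2 := hpos s hs; have h3 := hm0 s
        rw [div_pow, div_lt_one (by positivity)]
        nlinarith
    exact (Finset.max'_lt_iff _ (by simp)).2 hkey
  have hρs : ∀ s ∈ X, (m s)^2 ≤ ρ * (u s s)^2 := by
    intro s hs
    have hmem : (m s / u s s)^2 ∈ insert (0:ℝ) (X.image (fun s => (m s / u s s)^2)) :=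
      Finset.mem_insert_of_mem (Finset.mem_image_of_mem _ hs)
    have h : (m s / u s s)^2 ≤ ρ := Finset.le_max' _ _ hmem
    have h2 := hpos s hs
    rw [div_pow, div_le_iff₀ (by positivity)] at h
    linarith
  set Em : ℝ := (insert (1:ℝ) (X.image (fun s => (e2 s)^2))).max' (by simp) with hEm
  have hEm1 : (1:ℝ) ≤ Em :=
    Finset.le_max' (insert (1:ℝ) (X.image (fun s => (e2 s)^2))) 1
      (Finset.mem_insert_self _ _)
  have hEms : ∀ s ∈ X, (e2 s)^2 ≤ Em := by
    intro s hs
    have hmem : (e2 s)^2 ∈ insert (1:ℝ) (X.image (fun s => (e2 s)^2)) :=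
      Finset.mem_insert_of_mem (Finset.mem_image_of_mem _ hs)
    exact Finset.le_max' _ _ hmem
  set ε : ℝ := Real.sqrt ((1 - ρ)/Em) with hε
  have hEm0 : (0:ℝ) < Em := by linarith
  have hεpos : 0 < ε := Real.sqrt_pos.2 (div_pos (by linarith) hEm0)
  have hε2 : ε^2 = (1-ρ)/Em := Real.sq_sqrt (le_of_lt (div_pos (by linarith) hEm0))
  have hεs : ∀ s ∈ X, ε^2 * (e2 s)^2 ≤ 1 - ρ := by
    intro s hs
    rw [hε2]
    calc (1-ρ)/Em * (e2 s)^2 ≤ (1-ρ)/Em * Em :=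
          mul_le_mul_of_nonneg_left (hEms s hs) (le_of_lt (div_pos (by linarith) hEm0))
      _ = 1 - ρ := div_mul_cancel₀ _ (ne_of_gt hEm0)
  set β : (Fin d → ℝ) → ℝ := fun s => Real.sqrt (1 - ε^2 * (e2 s)^2) / (u s s) with hβ
  have hβsq : ∀ s ∈ X, (β s)^2 * (u s s)^2 = 1 - ε^2*(e2 s)^2 := by
    intro s hs
    have h1 : 0 ≤ 1 - ε^2*(e2 s)^2 := by have := hεs s hs; linarith
    have h2 := hpos s hs
    simp only [hβ]
    rw [div_pow, Real.sq_sqrt h1, div_mul_cancel₀]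
    exact pow_ne_zero 2 (ne_of_gt h2)
  have hβle : ∀ s ∈ X, (β s)^2 * (u s s)^2 ≤ 1 := by
    intro s hs
    rw [hβsq s hs]
    nlinarith [he20 s, sq_nonneg ε, sq_nonneg (e2 s), mul_nonneg (sq_nonneg ε) (sq_nonneg (e2 s))]
  set g : (Fin d → ℝ) → (Fin d → ℝ) → ℝ := fun s z => ‖Lm ε (β s) (u s) z‖ with hg
  have hgval : ∀ s z, (g s z)^2 = ε^2 * (e2 z)^2 + (β s)^2 * (u s z)^2 := by
    intro s z; exact Lm_norm_sq ε (β s) (u s) z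
  have hg0 : ∀ s z, 0 ≤ g s z := fun s z => norm_nonneg _
  have hgs1 : ∀ s ∈ X, g s s = 1 := by
    intro s hs
    apply sq_eq_one_of_nonneg (hg0 s s)
    rw [hgval, hβsq s hs]; ring
  have hgcross : ∀ i ∈ X, ∀ s ∈ X, g i s ≤ 1 := by
    intro i hi s hs
    apply le_one_of_sq_le_one (hg0 i s)
    by_cases h : s = i
    · subst h
      rw [hgval, hβsq s hs]; nlinarith [sq_nonneg (g s s)]
    · rw [hgval]
      have h1 : |u i s| ≤ m i := hmge i s (Finset.mem_erase.2 ⟨h, hs⟩)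
      have h1' : (u i s)^2 ≤ (m i)^2 := by
        rw [← sq_abs (u i s)]
        exact pow_le_pow_left₀ (abs_nonneg _) h1 2
      have h2 : (β i)^2*(u i s)^2 ≤ (β i)^2 * (m i)^2 :=
        mul_le_mul_of_nonneg_left h1' (sq_nonneg _)
      have h3 : (m i)^2 ≤ ρ * (u i i)^2 := hρs i hi
      have h4 : (β i)^2 * (m i)^2 ≤ ρ * ((β i)^2 * (u i i)^2) := by nlinarith [sq_nonneg (β i)]
      have h5 : (β i)^2 * (u i i)^2 ≤ 1 := hβle i hi
      have h6 : ε^2*(e2 s)^2 ≤ 1 - ρ := hεs s hs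
      nlinarith
  -- the norm
  refine ⟨⟨fun z => X.sup' hne (fun s => g s z), ?_, ?_, ?_, ?_⟩, ?_⟩
  · -- eq_zero_iff
    intro z
    constructor
    · intro h
      obtain ⟨s₀, hs₀⟩ := hne
      have h1 : g s₀ z ≤ 0 := h ▸ Finset.le_sup' (fun s => g s z) hs₀
      have h2 : g s₀ z = 0 := le_antisymm h1 (hg0 s₀ z)
      have h3 : (g s₀ z)^2 = 0 := by rw [h2]; ring
      rw [hgval] at h3
      have hε2pos : 0 < ε^2 := pow_pos hεpos 2
      have h4 : (e2 z)^2 ≤ 0 := by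
        nlinarith [mul_nonneg (sq_nonneg (β s₀)) (sq_nonneg ((u s₀) z))]
      have h4' : (e2 z)^2 = 0 := le_antisymm h4 (sq_nonneg _)
      exact e2_eq_zero (sq_eq_zero_iff.mp h4')
    · intro h
      subst h
      have : ∀ s, g s 0 = 0 := by
        intro s
        show ‖Lm ε (β s) (u s) 0‖ = 0
        rw [map_zero, norm_zero]
      calc X.sup' hne (fun s => g s 0) = X.sup' hne (fun _ => (0:ℝ)) :=
            Finset.sup'_congr hne rfl (fun s _ => this s)
        _ = 0 := Finset.sup'_const hne 0
  · -- smul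
    intro a z
    show X.sup' hne (fun s => g s (a • z)) = |a| * X.sup' hne (fun s => g s z)
    have hsm : ∀ s, g s (a • z) = |a| * g s z := by
      intro s
      rw [hg]
      show ‖Lm ε (β s) (u s) (a • z)‖ = |a| * ‖Lm ε (β s) (u s) z‖
      rw [map_smul, norm_smul, Real.norm_eq_abs]
    apply le_antisymm
    · apply (Finset.sup'_le_iff hne _).2
      intro s hs
      rw [hsm s]
      exact mul_le_mul_of_nonneg_left (Finset.le_sup' (fun r => g r z) hs) (abs_nonneg a)
    · obtain ⟨s₀, hs₀, hmax⟩ := Finset.exists_mem_eq_sup' hne (fun s => g s z)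
      rw [hmax, ← hsm s₀]
      exact Finset.le_sup' (fun s => g s (a • z)) hs₀
  · -- add_le
    intro z w
    show X.sup' hne (fun s => g s (z + w)) ≤ X.sup' hne (fun s => g s z) + X.sup' hne (fun s => g s w)
    apply (Finset.sup'_le_iff hne _).2
    intro s hs
    have : g s (z + w) ≤ g s z + g s w := by
      rw [hg]
      show ‖Lm ε (β s) (u s) (z + w)‖ ≤ _
      rw [map_add]
      exact norm_add_le _ _
    refine le_trans this (add_le_add ?_ ?_)
    · exact Finset.le_sup' (fun r => g r z) hs
    · exact Finset.le_sup' (fun r => g r w) hs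
  · -- strict convexity
    intro x y hx hy hxy
    try dsimp only at hx hy ⊢
    obtain ⟨s₀, hs₀, hmax⟩ := Finset.exists_mem_eq_sup' hne (fun s => g s ((1/2 : ℝ) • (x + y)))
    rw [hmax]
    have hgx : g s₀ x ≤ 1 := hx ▸ Finset.le_sup' (fun s => g s x) hs₀
    have hgy : g s₀ y ≤ 1 := hy ▸ Finset.le_sup' (fun s => g s y) hs₀
    have hmid : g s₀ ((1/2 : ℝ) • (x + y)) ≤ (g s₀ x + g s₀ y)/2 := by
      rw [hg]
      show ‖Lm ε (β s₀) (u s₀) ((1/2 : ℝ) • (x + y))‖ ≤ _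
      rw [map_smul, map_add, norm_smul, Real.norm_eq_abs]
      rw [show |(1/2 : ℝ)| = 1/2 by norm_num]
      have := norm_add_le (Lm ε (β s₀) (u s₀) x) (Lm ε (β s₀) (u s₀) y)
      linarith
    by_contra hcon
    push_neg at hcon
    have he1 : g s₀ ((1/2 : ℝ) • (x + y)) = 1 := le_antisymm (by linarith) hcon
    have he2' : g s₀ x = 1 ∧ g s₀ y = 1 := by constructor <;> linarith
    have := linmap_mid_eq (Lm ε (β s₀) (u s₀)) x y he2'.1 he2'.2 he1
    exact hxy (Lm_inj (ne_of_gt hεpos) _ _ this)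
  · -- values
    intro s hs
    dsimp only
    apply le_antisymm
    · exact (Finset.sup'_le_iff hne _).2 (fun i hi => hgcross i hi s hs)
    · have := Finset.le_sup' (fun i => g i s) hs
      rw [hgs1 s hs] at this
      exact this

end Through
section Reduction
variable {d : ℕ}

/-- the linear functional `x ↦ ∑ i, v i * x i` -/
def dualF (v : Fin d → ℝ) : (Fin d → ℝ) →ₗ[ℝ] ℝ where
  toFun x := ∑ i, v i * x i
  map_add' x y := by
    simp only [Pi.add_apply, mul_add]
    rw [Finset.sum_add_distrib]
  map_smul' a x := by
    simp only [Pi.smul_apply, smul_eq_mul, RingHom.id_apply]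
    rw [Finset.mul_sum]
    exact Finset.sum_congr rfl (fun i _ => by ring)

lemma dualF_self_pos {v : Fin d → ℝ} (hv : v ≠ 0) : 0 < dualF v v := by
  obtain ⟨i, hi⟩ := Function.ne_iff.1 hv
  have : (0:ℝ) < v i * v i := mul_self_pos.2 hi
  refine Finset.sum_pos' (fun j _ => mul_self_nonneg (v j)) ⟨i, Finset.mem_univ i, this⟩

lemma exists_generic_v (S : Finset (Fin d → ℝ))
    (φ : (Fin d → ℝ) → ((Fin d → ℝ) →ₗ[ℝ] ℝ))
    (hφ : ∀ s ∈ S, φ s ≠ 0) : ∃ v, ∀ s ∈ S, φ s v ≠ 0 := by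
  by_contra h
  push_neg at h
  have hcover : ⋃ (s : {x // x ∈ S}), ((LinearMap.ker (φ s.1) : Subspace ℝ (Fin d → ℝ)) :
      Set (Fin d → ℝ)) = Set.univ := by
    ext x
    simp only [Set.mem_iUnion, Set.mem_univ, iff_true]
    obtain ⟨s, hs, hsx⟩ := h x
    exact ⟨⟨s, hs⟩, LinearMap.mem_ker.2 hsx⟩
  obtain ⟨⟨s, hs⟩, htop⟩ := Subspace.exists_eq_top_of_iUnion_eq_univ hcover
  exact hφ s hs (LinearMap.ker_eq_top.1 htop)

/-- The main geometric reduction: from a convexly independent set `S`, extract at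
least half of it, a translation `t` avoiding a given finite bad set, and a strictly
convex norm taking value 1 on the translated points, with translated points pairwise
nonparallel. -/
lemma geom_reduction (S : Finset (Fin d → ℝ)) (hS : ConvInd (S : Set (Fin d → ℝ)))
    (h2 : 2 ≤ S.card) (bad : Finset (Fin d → ℝ)) :
    ∃ (S' : Finset (Fin d → ℝ)) (t : Fin d → ℝ) (ν : StrictNorm d),
      S' ⊆ S ∧ S.card ≤ 2 * S'.card ∧ t ∉ bad ∧
      (∀ s ∈ S', ν.toFun (s + t) = 1) ∧
      (∀ s ∈ S', ∀ r ∈ S', s ≠ r → ∀ c : ℝ, s + t ≠ c • (r + t)) := by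
  classical
  -- exposing functionals
  have hφ' : ∀ s : Fin d → ℝ, ∃ φ : (Fin d → ℝ) →ₗ[ℝ] ℝ,
      s ∈ S → ∀ r ∈ S, r ≠ s → φ r < φ s := by
    intro s
    by_cases hs : s ∈ S
    · obtain ⟨φ, hφ⟩ := exists_exposing S hS s hs
      exact ⟨φ, fun _ => hφ⟩
    · exact ⟨0, fun h => absurd h hs⟩
  choose φ hφ using hφ'
  have hφne : ∀ s ∈ S, φ s ≠ 0 := by
    intro s hs h0
    obtain ⟨r, hr, hrs⟩ := Finset.exists_mem_ne (s := S) (by omega) s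
    have := hφ s hs r hr hrs
    rw [h0] at this
    simp at this
  obtain ⟨v, hv⟩ := exists_generic_v S φ hφne
  have hSne : S.Nonempty := Finset.card_pos.1 (by omega)
  have hvne : v ≠ 0 := by
    intro h
    obtain ⟨s, hs⟩ := hSne
    apply hv s hs
    rw [h, map_zero]
  -- split into halves
  set Sp := S.filter (fun s => 0 < φ s v) with hSp
  set Sm := S.filter (fun s => φ s v < 0) with hSm
  have hcardsum : S.card ≤ Sp.card + Sm.card := by
    have hsub : S ⊆ Sp ∪ Sm := by
      intro s hs
      rcases lt_or_gt_of_ne (hv s hs) with h | h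
      · exact Finset.mem_union_right _ (Finset.mem_filter.2 ⟨hs, h⟩)
      · exact Finset.mem_union_left _ (Finset.mem_filter.2 ⟨hs, h⟩)
    exact le_trans (Finset.card_le_card hsub) (Finset.card_union_le _ _)
  obtain ⟨S', v', hsub, hcard, hpos', hv'ne⟩ :
      ∃ (S' : Finset (Fin d → ℝ)) (v' : Fin d → ℝ), S' ⊆ S ∧ S.card ≤ 2 * S'.card ∧
        (∀ s ∈ S', 0 < φ s v') ∧ v' ≠ 0 := by
    by_cases hc : Sm.card ≤ Sp.card
    · refine ⟨Sp, v, Finset.filter_subset _ _, ?_, fun s hs => (Finset.mem_filter.1 hs).2, hvne⟩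
      omega
    · refine ⟨Sm, -v, Finset.filter_subset _ _, ?_, ?_, neg_ne_zero.2 hvne⟩
      · omega
      · intro s hs
        have := (Finset.mem_filter.1 hs).2
        rw [map_neg]
        linarith
  -- the translation parameter
  set χ := dualF v' with hχ
  have hχv : 0 < χ v' := dualF_self_pos hv'ne
  set B : Finset ℝ := insert (0:ℝ)
    ((S'.image (fun s => |χ s| / χ v')) ∪
     ((S' ×ˢ S').image (fun pr => (|φ pr.1 pr.1| + |φ pr.1 pr.2|) / (2 * φ pr.1 v')))) with hB
  set R₁ : ℝ := B.max' ⟨0, Finset.mem_insert_self _ _⟩ + 1 with hR₁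
  have hR₁gt : ∀ y ∈ B, y < R₁ := by
    intro y hy
    have := Finset.le_max' B y hy
    rw [hR₁]; linarith
  set badR : Finset ℝ := bad.image (fun b => χ b / χ v') with hbadR
  set R : ℝ := (insert R₁ badR).max' ⟨R₁, Finset.mem_insert_self _ _⟩ + 1 with hR
  have hRgt : ∀ y ∈ insert R₁ badR, y < R := by
    intro y hy
    have := Finset.le_max' _ y hy
    rw [hR]; linarith
  have hRR₁ : R₁ < R := hRgt R₁ (Finset.mem_insert_self _ _)
  have hRB : ∀ y ∈ B, y < R := fun y hy => lt_trans (hR₁gt y hy) hRR₁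
  set t : Fin d → ℝ := R • v' with ht
  -- t avoids bad
  have htbad : t ∉ bad := by
    intro hmem
    have h1 : χ t / χ v' ∈ badR := Finset.mem_image_of_mem _ hmem
    have h2' : χ t / χ v' < R := hRgt _ (Finset.mem_insert_of_mem h1)
    have h3 : χ t = R * χ v' := by rw [ht, map_smul]; simp
    rw [h3, mul_div_assoc, div_self (ne_of_gt hχv), mul_one] at h2'
    exact lt_irrefl R h2'
  -- positivity of χ on translated points
  have hχpos : ∀ s ∈ S', 0 < χ (s + t) := by
    intro s hs
    have h1 : |χ s| / χ v' < R := hRB _ (Finset.mem_insert_of_mem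
      (Finset.mem_union_left _ (Finset.mem_image_of_mem _ hs)))
    have h2' : |χ s| < R * χ v' := by
      rw [div_lt_iff₀ hχv] at h1; linarith
    have : χ (s + t) = χ s + R * χ v' := by rw [map_add, ht, map_smul]; simp
    rw [this]
    have := neg_abs_le (χ s)
    linarith
  -- dominance inequalities
  have hdomkey : ∀ s ∈ S', ∀ r ∈ S', |φ s (r + t)| < φ s (s + t) ∨ (r = s) := by
    intro s hs r hr
    by_cases hrs : r = s
    · exact Or.inr hrs
    left
    have hsv := hpos' s hs
    have hmm : ((s, r) : (Fin d → ℝ) × (Fin d → ℝ)) ∈ S' ×ˢ S' :=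
      Finset.mem_product.2 ⟨hs, hr⟩
    have hB1 : (|φ s s| + |φ s r|) / (2 * φ s v') < R :=
      hRB _ (Finset.mem_insert_of_mem (Finset.mem_union_right _
        (Finset.mem_image_of_mem _ hmm)))
    have hB2 : |φ s s| + |φ s r| < R * (2 * φ s v') := by
      rw [div_lt_iff₀ (by linarith)] at hB1; linarith
    have hexp : φ s r < φ s s := hφ s (hsub hs) r (hsub hr) hrs
    have hvt : φ s t = R * φ s v' := by rw [ht, map_smul]; simp
    have habs1 := neg_abs_le (φ s s)
    have habs2 := neg_abs_le (φ s r)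
    have habs3 := le_abs_self (φ s r)
    rw [abs_lt]
    constructor
    · rw [map_add, map_add, hvt]
      nlinarith
    · rw [map_add, map_add, hvt]
      linarith
  -- build the norm
  have hposX : ∀ s ∈ S', 0 < φ s (s + t) := by
    intro s hs
    rcases hdomkey s hs s hs with h | h
    · exact lt_of_le_of_lt (abs_nonneg _) h
    · have hsv := hpos' s hs
      have hmm : ((s, s) : (Fin d → ℝ) × (Fin d → ℝ)) ∈ S' ×ˢ S' :=
        Finset.mem_product.2 ⟨hs, hs⟩
      have hB1 : (|φ s s| + |φ s s|) / (2 * φ s v') < R :=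
        hRB _ (Finset.mem_insert_of_mem (Finset.mem_union_right _
          (Finset.mem_image_of_mem _ hmm)))
      have hB2 : |φ s s| + |φ s s| < R * (2 * φ s v') := by
        rw [div_lt_iff₀ (by linarith)] at hB1; linarith
      have hvt : φ s t = R * φ s v' := by rw [ht, map_smul]; simp
      have habs1 := neg_abs_le (φ s s)
      rw [map_add, hvt]
      nlinarith
  obtain ⟨ν, hν⟩ := exists_strictNorm_through (S'.image (fun s => s + t))
    (fun x => φ (x - t))
    (by
      intro x hx
      obtain ⟨s, hs, hsx⟩ := Finset.mem_image.1 hx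
      show 0 < φ (x - t) x
      have hsx' : s + t = x := hsx
      have hxt : x - t = s := by rw [← hsx']; abel
      rw [hxt, ← hsx']
      exact hposX s hs)
    (by
      intro x hx y hy hne
      obtain ⟨s, hs, hsx⟩ := Finset.mem_image.1 hx
      obtain ⟨r, hr, hry⟩ := Finset.mem_image.1 hy
      show |φ (x - t) y| < φ (x - t) x
      have hsx' : s + t = x := hsx
      have hry' : r + t = y := hry
      have hxt : x - t = s := by rw [← hsx']; abel
      have hrs : r ≠ s := fun h => hne (by rw [← hsx', ← hry', h])
      rcases hdomkey s hs r hr with h | h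
      · rw [hxt, ← hsx', ← hry']; exact h
      · exact absurd h hrs)
  refine ⟨S', t, ν, hsub, hcard, htbad, ?_, ?_⟩
  · intro s hs
    exact hν _ (Finset.mem_image_of_mem _ hs)
  · -- nonparallel
    intro s hs r hr hsr c heq
    have h1 : ν.toFun (s + t) = 1 := hν _ (Finset.mem_image_of_mem _ hs)
    have h2' : ν.toFun (r + t) = 1 := hν _ (Finset.mem_image_of_mem _ hr)
    have h3 : ν.toFun (c • (r + t)) = |c| * ν.toFun (r + t) := ν.smul_eq c (r + t)
    rw [← heq, h1, h2', mul_one] at h3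
    have hc : c = 1 ∨ c = -1 := by
      rcases abs_eq (by norm_num : (0:ℝ) ≤ 1) |>.1 h3.symm with h | h
      · exact Or.inl h
      · exact Or.inr h
    rcases hc with rfl | rfl
    · rw [one_smul] at heq
      exact hsr (by have := add_right_cancel heq; exact this)
    · have hps := hχpos s hs
      have hpr := hχpos r hr
      have : χ (s + t) = - χ (r + t) := by
        rw [heq, map_smul]
        simp
      linarith
end Reduction
section Counting

lemma choose_ineq (n : ℕ) (hn : 2 ≤ n) : (2*n).choose n ≤ 6 * (2*n-2).choose (n-2) := by
  obtain ⟨m, rfl⟩ := Nat.exists_eq_add_of_le hn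
  rw [show 2*(2+m) = 2*m+4 by ring, show 2+m = m+2 by ring,
    show 2*m+4-2 = 2*m+2 by omega, show m+2-2 = m by omega]
  set Y := Nat.choose (2*m+2) m with hY
  set X := Nat.choose (2*m+3) (m+1) with hX
  set C := Nat.choose (2*m+4) (m+2) with hC
  have hA : (2*m+4) * X = C * (m+2) := by
    have h := Nat.add_one_mul_choose_eq (2*m+3) (m+1)
    simpa [Nat.succ_eq_add_one, show 2*m+3+1 = 2*m+4 by ring, show m+1+1 = m+2 by ring] using h
  have hB : (2*m+3) * Y = X * (m+1) := by
    have h := Nat.add_one_mul_choose_eq (2*m+2) m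
    simpa [Nat.succ_eq_add_one, show 2*m+2+1 = 2*m+3 by ring] using h
  have key : (m+1)*(m+2)*C = (2*m+4)*((2*m+3)*Y) := by
    calc (m+1)*(m+2)*C = (m+1)*(C*(m+2)) := by ring
      _ = (m+1)*((2*m+4)*X) := by rw [← hA]
      _ = (2*m+4)*(X*(m+1)) := by ring
      _ = (2*m+4)*((2*m+3)*Y) := by rw [← hB]
  have hle : (2*m+4)*(2*m+3) ≤ 6*((m+1)*(m+2)) := by nlinarith
  have hfin : (m+1)*(m+2)*C ≤ (m+1)*(m+2)*(6*Y) := by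
    calc (m+1)*(m+2)*C = (2*m+4)*(2*m+3)*Y := by rw [key]; ring
      _ ≤ 6*((m+1)*(m+2))*Y := Nat.mul_le_mul_right _ hle
      _ = (m+1)*(m+2)*(6*Y) := by ring
  exact Nat.le_of_mul_le_mul_left hfin (by positivity)

lemma count_containing {α : Type*} [DecidableEq α] (V : Finset α) {a b : α}
    (ha : a ∈ V) (hb : b ∈ V) (hab : a ≠ b) (n : ℕ) (hn : 2 ≤ n) :
    ((V.powersetCard n).filter (fun R => a ∈ R ∧ b ∈ R)).card
      = (V.card - 2).choose (n - 2) := by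
  classical
  have hcard : ((V.erase a).erase b).card = V.card - 2 := by
    rw [Finset.card_erase_of_mem (Finset.mem_erase.2 ⟨Ne.symm hab, hb⟩),
      Finset.card_erase_of_mem ha]
    omega
  rw [← hcard, ← Finset.card_powersetCard]
  refine Finset.card_bij' (fun R _ => (R.erase a).erase b)
    (fun R' _ => insert a (insert b R')) ?_ ?_ ?_ ?_
  · -- hi
    intro R hR
    rw [Finset.mem_filter, Finset.mem_powersetCard] at hR
    obtain ⟨⟨hsub, hcardR⟩, haR, hbR⟩ := hR
    rw [Finset.mem_powersetCard]
    constructor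
    · intro x hx
      rw [Finset.mem_erase] at hx ⊢
      refine ⟨hx.1, ?_⟩
      rw [Finset.mem_erase] at hx ⊢
      exact ⟨hx.2.1, hsub hx.2.2⟩
    · rw [Finset.card_erase_of_mem (Finset.mem_erase.2 ⟨Ne.symm hab, hbR⟩),
        Finset.card_erase_of_mem haR, hcardR]
      omega
  · -- hj
    intro R' hR'
    rw [Finset.mem_powersetCard] at hR'
    obtain ⟨hsub, hcardR'⟩ := hR'
    have haR' : a ∉ R' := fun h => (Finset.mem_erase.1 (Finset.mem_of_mem_erase (hsub h))).1 rfl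
    have hbR' : b ∉ R' := fun h => (Finset.mem_erase.1 (hsub h)).1 rfl
    have habi : a ∉ insert b R' := by
      rw [Finset.mem_insert]
      rintro (rfl | h)
      · exact hab rfl
      · exact haR' h
    rw [Finset.mem_filter, Finset.mem_powersetCard]
    refine ⟨⟨?_, ?_⟩, Finset.mem_insert_self _ _,
      Finset.mem_insert_of_mem (Finset.mem_insert_self _ _)⟩
    · intro x hx
      rw [Finset.mem_insert] at hx
      rcases hx with rfl | hx
      · exact ha
      rw [Finset.mem_insert] at hx
      rcases hx with rfl | hx
      · exact hb
      · exact Finset.mem_of_mem_erase (Finset.mem_of_mem_erase (hsub hx))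
    · rw [Finset.card_insert_of_notMem habi, Finset.card_insert_of_notMem hbR', hcardR']
      omega
  · -- left inverse
    intro R hR
    rw [Finset.mem_filter] at hR
    obtain ⟨_, haR, hbR⟩ := hR
    show insert a (insert b ((R.erase a).erase b)) = R
    rw [Finset.insert_erase (Finset.mem_erase.2 ⟨Ne.symm hab, hbR⟩), Finset.insert_erase haR]
  · -- right inverse
    intro R' hR'
    rw [Finset.mem_powersetCard] at hR'
    obtain ⟨hsub, _⟩ := hR'
    have haR' : a ∉ R' := fun h => (Finset.mem_erase.1 (Finset.mem_of_mem_erase (hsub h))).1 rfl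
    have hbR' : b ∉ R' := fun h => (Finset.mem_erase.1 (hsub h)).1 rfl
    have habi : a ∉ insert b R' := by
      rw [Finset.mem_insert]
      rintro (rfl | h)
      · exact hab rfl
      · exact haR' h
    show ((insert a (insert b R')).erase a).erase b = R'
    rw [Finset.erase_insert habi, Finset.erase_insert hbR']

/-- the averaging step: some `n`-subset of the `2n`-point ground set retains at
least a sixth of the pairs -/
lemma exists_half_subset {α : Type*} [DecidableEq α] (V : Finset α)
    (T : Finset (α × α)) (n : ℕ) (hn : 2 ≤ n) (hV : V.card = 2 * n)
    (hT : ∀ e ∈ T, e.1 ∈ V ∧ e.2 ∈ V ∧ e.1 ≠ e.2) :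
    ∃ R ∈ V.powersetCard n,
      T.card ≤ 6 * (T.filter (fun e => e.1 ∈ R ∧ e.2 ∈ R)).card := by
  classical
  set C' : ℕ := (2*n-2).choose (n-2) with hC'
  set C2n : ℕ := (2*n).choose n with hC2n
  have hsum : ∑ R ∈ V.powersetCard n, (T.filter (fun e => e.1 ∈ R ∧ e.2 ∈ R)).card
      = ∑ e ∈ T, ((V.powersetCard n).filter (fun R => e.1 ∈ R ∧ e.2 ∈ R)).card := by
    simp_rw [Finset.card_filter]
    exact Finset.sum_comm
  have hconst : ∀ e ∈ T,
      ((V.powersetCard n).filter (fun R => e.1 ∈ R ∧ e.2 ∈ R)).card = C' := by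
    intro e he
    obtain ⟨h1, h2, h3⟩ := hT e he
    rw [count_containing V h1 h2 h3 n hn, hV]
  have hsum2 : ∑ R ∈ V.powersetCard n, (T.filter (fun e => e.1 ∈ R ∧ e.2 ∈ R)).card
      = T.card * C' := by
    rw [hsum, Finset.sum_congr rfl hconst, Finset.sum_const, smul_eq_mul]
  have hPne : (V.powersetCard n).Nonempty := by
    apply Finset.powersetCard_nonempty.2
    omega
  have hPcard : (V.powersetCard n).card = C2n := by
    rw [Finset.card_powersetCard, hV]
  obtain ⟨R, hR, hle⟩ := Finset.exists_le_of_sum_le (f := fun _ => T.card * C')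
    (g := fun R => C2n * (T.filter (fun e => e.1 ∈ R ∧ e.2 ∈ R)).card) hPne
    (by
      rw [Finset.sum_const, smul_eq_mul, hPcard, ← Finset.mul_sum, hsum2])
  refine ⟨R, hR, ?_⟩
  have hC'pos : 0 < C' := Nat.choose_pos (by omega)
  have hch : C2n ≤ 6 * C' := choose_ineq n hn
  have h2 : T.card * C' ≤ (6 * (T.filter (fun e => e.1 ∈ R ∧ e.2 ∈ R)).card) * C' := by
    calc T.card * C' ≤ C2n * (T.filter (fun e => e.1 ∈ R ∧ e.2 ∈ R)).card := hle
      _ ≤ (6 * C') * (T.filter (fun e => e.1 ∈ R ∧ e.2 ∈ R)).card :=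
          Nat.mul_le_mul_right _ hch
      _ = (6 * (T.filter (fun e => e.1 ∈ R ∧ e.2 ∈ R)).card) * C' := by ring
  exact Nat.le_of_mul_le_mul_right h2 hC'pos

end Counting
section Inequalities
variable {d : ℕ}

/-- the defining set of `Mfun` -/
def Mset (d m n : ℕ) : Set ℕ :=
  {k | ∃ P Q S : Finset (Fin d → ℝ),
    P.card = m ∧ Q.card = n ∧
    (S : Set (Fin d → ℝ)) ⊆ (P : Set (Fin d → ℝ)) + (Q : Set (Fin d → ℝ)) ∧
    ConvInd (S : Set (Fin d → ℝ)) ∧ S.card = k}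

lemma Mfun_eq (d m n : ℕ) : Mfun d m n = sSup (Mset d m n) := rfl

lemma Mset_bddAbove (d m n : ℕ) : BddAbove (Mset d m n) := by
  classical
  refine ⟨m * n, ?_⟩
  rintro k ⟨P, Q, S, hP, hQ, hsub, _, rfl⟩
  have hsub' : S ⊆ P + Q := by
    rw [← Finset.coe_subset, Finset.coe_add]
    exact hsub
  calc S.card ≤ (P + Q).card := Finset.card_le_card hsub'
    _ ≤ P.card * Q.card := Finset.card_add_le
    _ = m * n := by rw [hP, hQ]

lemma le_Mfun {d m n k : ℕ} (h : k ∈ Mset d m n) : k ≤ Mfun d m n :=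
  le_csSup (Mset_bddAbove d m n) h

lemma Efun_le_Mfun (d n : ℕ) : Efun d n ≤ Mfun d n n := by
  classical
  rw [Efun]
  apply csSup_le'
  rintro k ⟨P, T, hP, hcond, hinj, hconv, rfl⟩
  apply le_Mfun
  refine ⟨P.image (fun x => (2⁻¹ : ℝ) • x), P.image (fun x => (2⁻¹ : ℝ) • x),
    T.image (fun e => midpoint ℝ e.1 e.2), ?_, ?_, ?_, ?_, ?_⟩
  · rw [Finset.card_image_of_injective _ (smul_right_injective _ (by norm_num)), hP]
  · rw [Finset.card_image_of_injective _ (smul_right_injective _ (by norm_num)), hP]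
  · rw [Finset.coe_image]
    rintro x ⟨e, he, rfl⟩
    obtain ⟨h1, h2, _, _⟩ := hcond e he
    have hmid : midpoint ℝ e.1 e.2 = (2⁻¹ : ℝ) • e.1 + (2⁻¹ : ℝ) • e.2 := by
      rw [midpoint_eq_smul_add, invOf_eq_inv, smul_add]
    show midpoint ℝ e.1 e.2 ∈ _
    rw [hmid]
    exact Set.add_mem_add (Finset.mem_coe.2 (Finset.mem_image_of_mem _ h1))
      (Finset.mem_coe.2 (Finset.mem_image_of_mem _ h2))
  · rw [Finset.coe_image]
    exact hconv
  · exact Finset.card_image_of_injOn hinj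

lemma Wfun_le_Mfun (d n : ℕ) : Wfun d n ≤ Mfun d n n := by
  classical
  rw [Wfun]
  apply csSup_le'
  rintro k ⟨S, ν, T, hS, hcond, hpar, rfl⟩
  apply le_Mfun
  have hinj : Set.InjOn (fun e : (Fin d → ℝ) × (Fin d → ℝ) => e.1 - e.2) ↑T := by
    intro e he f hf hef
    by_contra hne
    exact hpar e he f hf hne 1 (by rw [one_smul]; exact hef)
  refine ⟨S, S.image (fun x => -x), T.image (fun e => e.1 - e.2), hS, ?_, ?_, ?_, ?_⟩
  · rw [Finset.card_image_of_injective _ neg_injective, hS]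
  · rw [Finset.coe_image]
    rintro x ⟨e, he, rfl⟩
    obtain ⟨h1, h2, _⟩ := hcond e he
    have heq : e.1 - e.2 = e.1 + -e.2 := by abel
    show e.1 - e.2 ∈ _
    rw [heq]
    exact Set.add_mem_add (Finset.mem_coe.2 h1)
      (Finset.mem_coe.2 (Finset.mem_image_of_mem _ h2))
  · apply convInd_of_unit ν
    intro y hy
    obtain ⟨e, he, rfl⟩ := Finset.mem_image.1 hy
    exact (hcond e he).2.2
  · exact Finset.card_image_of_injOn hinj

end Inequalities
section LowerBounds

def Eset (d n : ℕ) : Set ℕ :=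
  {k | ∃ (P : Finset (Fin d → ℝ)) (T : Finset ((Fin d → ℝ) × (Fin d → ℝ))),
    P.card = n ∧
    (∀ e ∈ T, e.1 ∈ P ∧ e.2 ∈ P ∧ e.1 ≠ e.2 ∧ (e.2, e.1) ∉ T) ∧
    Set.InjOn (fun e : (Fin d → ℝ) × (Fin d → ℝ) => midpoint ℝ e.1 e.2) ↑T ∧
    ConvInd ((fun e : (Fin d → ℝ) × (Fin d → ℝ) => midpoint ℝ e.1 e.2) '' ↑T) ∧
    T.card = k}

lemma Eset_bddAbove (d n : ℕ) : BddAbove (Eset d n) := by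
  classical
  refine ⟨n * n, ?_⟩
  rintro k ⟨P, T, hP, hcond, _, _, rfl⟩
  have hsub : T ⊆ P ×ˢ P := by
    intro e he
    exact Finset.mem_product.2 ⟨(hcond e he).1, (hcond e he).2.1⟩
  calc T.card ≤ (P ×ˢ P).card := Finset.card_le_card hsub
    _ = n * n := by rw [Finset.card_product, hP]

lemma le_Efun {d n k : ℕ} (h : k ∈ Eset d n) : k ≤ Efun d n :=
  le_csSup (Eset_bddAbove d n) h

def Wset (d n : ℕ) : Set ℕ :=
  {k | ∃ (S : Finset (Fin d → ℝ)) (ν : StrictNorm d)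
      (T : Finset ((Fin d → ℝ) × (Fin d → ℝ))),
    S.card = n ∧
    (∀ e ∈ T, e.1 ∈ S ∧ e.2 ∈ S ∧ ν.toFun (e.1 - e.2) = 1) ∧
    (∀ e ∈ T, ∀ f ∈ T, e ≠ f → ∀ c : ℝ, e.1 - e.2 ≠ c • (f.1 - f.2)) ∧
    T.card = k}

lemma Wset_bddAbove (d n : ℕ) : BddAbove (Wset d n) := by
  classical
  refine ⟨n * n, ?_⟩
  rintro k ⟨S, ν, T, hS, hcond, _, rfl⟩
  have hsub : T ⊆ S ×ˢ S := by
    intro e he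
    exact Finset.mem_product.2 ⟨(hcond e he).1, (hcond e he).2.1⟩
  calc T.card ≤ (S ×ˢ S).card := Finset.card_le_card hsub
    _ = n * n := by rw [Finset.card_product, hS]

lemma le_Wfun {d n k : ℕ} (h : k ∈ Wset d n) : k ≤ Wfun d n :=
  le_csSup (Wset_bddAbove d n) h

lemma Mfun_le_6_Efun (d n : ℕ) (hd : 0 < d) (hn : 2 ≤ n) :
    Mfun d n n ≤ 6 * Efun d n := by
  classical
  haveI : Nonempty (Fin d) := ⟨⟨0, hd⟩⟩
  rw [Mfun_eq]
  apply csSup_le'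
  rintro k ⟨P, Q, S, hP, hQ, hsub, hconv, rfl⟩
  -- pick a generic shift w
  set badE : Finset (Fin d → ℝ) :=
    (P ×ˢ Q).image (fun pqr => (2⁻¹ : ℝ) • (pqr.2 - pqr.1)) with hbadE
  obtain ⟨w, hw⟩ := Infinite.exists_notMem_finset badE
  have hw' : ∀ p ∈ P, ∀ q ∈ Q, p + w ≠ q - w := by
    intro p hp q hq heq
    apply hw
    have h2w : (2⁻¹ : ℝ) • (q - p) = w := by
      have hq' : q - p = w + w := by
        have h2 : p + w + w = q := eq_sub_iff_add_eq.1 heq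
        rw [← h2]; abel
      rw [hq']
      have : w + w = (2 : ℝ) • w := (two_smul ℝ w).symm
      rw [this, smul_smul]
      norm_num
    have hmm : ((p, q) : (Fin d → ℝ) × (Fin d → ℝ)) ∈ P ×ˢ Q := Finset.mem_product.2 ⟨hp, hq⟩
    rw [hbadE]
    exact Finset.mem_image.2 ⟨(p,q), hmm, h2w⟩
  -- choose representations
  have hrep : ∀ s : Fin d → ℝ, ∃ pqr : (Fin d → ℝ) × (Fin d → ℝ),
      s ∈ S → (pqr.1 ∈ P ∧ pqr.2 ∈ Q ∧ pqr.1 + pqr.2 = s) := by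
    intro s
    by_cases hs : s ∈ S
    · obtain ⟨p, hp, q, hq, hpq⟩ := Set.mem_add.1 (hsub (Finset.mem_coe.2 hs))
      exact ⟨(p,q), fun _ => ⟨hp, hq, hpq⟩⟩
    · exact ⟨(0,0), fun h => absurd h hs⟩
  choose pq hpq using hrep
  set g : (Fin d → ℝ) → (Fin d → ℝ) × (Fin d → ℝ) :=
    fun s => ((pq s).1 + w, (pq s).2 - w) with hg
  have hkey : ∀ s ∈ S, (g s).1 + (g s).2 = s := by
    intro s hs
    show ((pq s).1 + w) + ((pq s).2 - w) = s
    calc ((pq s).1 + w) + ((pq s).2 - w) = (pq s).1 + (pq s).2 := by abel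
      _ = s := (hpq s hs).2.2
  set T : Finset ((Fin d → ℝ) × (Fin d → ℝ)) := S.image g with hT
  have hinjS : Set.InjOn g ↑S := by
    intro a ha b hb hab
    have h1 := hkey a (Finset.mem_coe.1 ha)
    have h2 := hkey b (Finset.mem_coe.1 hb)
    rw [← h1, ← h2, hab]
  have hTcard : T.card = S.card := Finset.card_image_of_injOn hinjS
  have hmid : ∀ s ∈ S, midpoint ℝ (g s).1 (g s).2 = (2⁻¹ : ℝ) • s := by
    intro s hs
    rw [midpoint_eq_smul_add, invOf_eq_inv, hkey s hs]
  -- ground set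
  set V₁ : Finset (Fin d → ℝ) := P.image (fun p => p + w) ∪ Q.image (fun q => q - w) with hV₁
  have hV₁card : V₁.card ≤ 2*n := by
    calc V₁.card ≤ (P.image (fun p => p + w)).card + (Q.image (fun q => q - w)).card :=
          Finset.card_union_le _ _
      _ ≤ P.card + Q.card := add_le_add (Finset.card_image_le) (Finset.card_image_le)
      _ = 2*n := by rw [hP, hQ]; ring
  obtain ⟨V, hV₁V, hVcard⟩ := Infinite.exists_superset_card_eq V₁ (2*n) hV₁card
  have hTV : ∀ e ∈ T, e.1 ∈ V ∧ e.2 ∈ V ∧ e.1 ≠ e.2 := by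
    intro e he
    obtain ⟨s, hs, rfl⟩ := Finset.mem_image.1 he
    obtain ⟨hp, hq, _⟩ := hpq s hs
    refine ⟨?_, ?_, ?_⟩
    · exact hV₁V (Finset.mem_union_left _ (Finset.mem_image_of_mem _ hp))
    · exact hV₁V (Finset.mem_union_right _ (Finset.mem_image_of_mem _ hq))
    · exact hw' _ hp _ hq
  obtain ⟨R, hR, hle6⟩ := exists_half_subset V T n hn hVcard hTV
  rw [Finset.mem_powersetCard] at hR
  set T' := T.filter (fun e => e.1 ∈ R ∧ e.2 ∈ R) with hT'
  have hT'T : T' ⊆ T := Finset.filter_subset _ _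
  have hT'mem : ∀ e ∈ T', ∃ s ∈ S, g s = e := by
    intro e he
    exact Finset.mem_image.1 (hT'T he)
  -- the reversed pair is never present
  have hrev : ∀ e ∈ T', (e.2, e.1) ∉ T' := by
    intro e he hmem
    obtain ⟨s, hs, hgs⟩ := hT'mem e he
    obtain ⟨r, hr, hgr⟩ := hT'mem _ hmem
    have h1 : (g r).1 = e.2 := by rw [hgr]
    have h2 : (g s).2 = e.2 := by rw [hgs]
    have : (pq r).1 + w = (pq s).2 - w := by
      have := h1.trans h2.symm
      exact this
    exact hw' _ (hpq r hr).1 _ (hpq s hs).2.1 this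
  -- midpoints injective
  have hinj' : Set.InjOn (fun e : (Fin d → ℝ) × (Fin d → ℝ) => midpoint ℝ e.1 e.2) ↑T' := by
    intro e he f hf hef
    obtain ⟨s, hs, hgs⟩ := hT'mem e (Finset.mem_coe.1 he)
    obtain ⟨r, hr, hgr⟩ := hT'mem f (Finset.mem_coe.1 hf)
    rw [← hgs, ← hgr]
    have hme : midpoint ℝ e.1 e.2 = (2⁻¹:ℝ) • s := by rw [← hgs]; exact hmid s hs
    have hmf : midpoint ℝ f.1 f.2 = (2⁻¹:ℝ) • r := by rw [← hgr]; exact hmid r hr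
    have hsr : s = r := by
      have : (2⁻¹:ℝ) • s = (2⁻¹:ℝ) • r := by
        rw [← hme, ← hmf]; exact hef
      exact smul_right_injective _ (by norm_num) this
    rw [hsr]
  -- convex independence of midpoints
  have hconv' : ConvInd ((fun e : (Fin d → ℝ) × (Fin d → ℝ) => midpoint ℝ e.1 e.2) '' ↑T') := by
    apply ConvInd.mono (hconv.smul (show (2⁻¹:ℝ) ≠ 0 by norm_num))
    rintro x ⟨e, he, rfl⟩
    obtain ⟨s, hs, hgs⟩ := hT'mem e (Finset.mem_coe.1 he)
    refine ⟨s, Finset.mem_coe.2 hs, ?_⟩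
    show (2⁻¹:ℝ) • s = midpoint ℝ e.1 e.2
    rw [← hgs]
    exact (hmid s hs).symm
  -- assemble the Efun witness
  have hwit : T'.card ∈ Eset d n := by
    refine ⟨R, T', hR.2, ?_, hinj', hconv', rfl⟩
    intro e he
    have heT := hT'T he
    obtain ⟨h1, h2⟩ := (Finset.mem_filter.1 he).2
    exact ⟨h1, h2, (hTV e heT).2.2, hrev e he⟩
  calc S.card = T.card := hTcard.symm
    _ ≤ 6 * T'.card := hle6
    _ ≤ 6 * Efun d n := Nat.mul_le_mul_left _ (le_Efun hwit)

end LowerBounds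
section WLower
variable {d : ℕ}

lemma one_le_Wfun (d n : ℕ) (hd : 0 < d) (hn : 2 ≤ n) : 1 ≤ Wfun d n := by
  classical
  haveI : Nonempty (Fin d) := ⟨⟨0, hd⟩⟩
  set i0 : Fin d := ⟨0, hd⟩ with hi0
  set x1 : Fin d → ℝ := Pi.single i0 1 with hx1
  have hx1ne : x1 ≠ 0 := by
    intro h
    have := congrFun h i0
    rw [hx1, Pi.single_eq_same] at this
    simp at this
  set ν : StrictNorm d := euclidStrictNorm d with hν
  have hνx1 : ν.toFun x1 = 1 := by
    show ‖(WithLp.equiv 2 (Fin d → ℝ)).symm x1‖ = 1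
    rw [EuclideanSpace.norm_eq]
    have hsum : ∑ i, ‖(WithLp.equiv 2 (Fin d → ℝ)).symm x1 i‖^2 = 1 := by
      have hterm : ∀ i, ‖(WithLp.equiv 2 (Fin d → ℝ)).symm x1 i‖^2
          = if i = i0 then 1 else 0 := by
        intro i
        show ‖x1 i‖^2 = _
        rw [hx1]
        by_cases h : i = i0
        · subst h; rw [Pi.single_eq_same]; simp
        · rw [Pi.single_eq_of_ne h]; simp [h]
      rw [Finset.sum_congr rfl (fun i _ => hterm i), Finset.sum_ite_eq' Finset.univ i0 (fun _ => (1:ℝ))]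
      simp
    rw [hsum, Real.sqrt_one]
  obtain ⟨V, hsup, hVcard⟩ := Infinite.exists_superset_card_eq {(0 : Fin d → ℝ), x1} n
    (le_trans (Finset.card_insert_le _ _) (by simp; omega))
  apply le_Wfun
  refine ⟨V, ν, {(x1, (0 : Fin d → ℝ))}, hVcard, ?_, ?_, Finset.card_singleton _⟩
  · intro e he
    rw [Finset.mem_singleton] at he
    subst he
    refine ⟨hsup (by simp), hsup (by simp), ?_⟩
    show ν.toFun (x1 - 0) = 1
    rw [sub_zero]
    exact hνx1
  · intro e he f hf hef
    rw [Finset.mem_singleton] at he hf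
    exact absurd (he.trans hf.symm) hef

lemma Mfun_le_12_Wfun (d n : ℕ) (hd : 0 < d) (hn : 2 ≤ n) :
    Mfun d n n ≤ 12 * Wfun d n := by
  classical
  haveI : Nonempty (Fin d) := ⟨⟨0, hd⟩⟩
  rw [Mfun_eq]
  apply csSup_le'
  rintro k ⟨P, Q, S, hP, hQ, hsub, hconv, rfl⟩
  by_cases hk : S.card ≤ 1
  · have h1 := one_le_Wfun d n hd hn
    omega
  push_neg at hk
  -- geometric reduction
  set badW : Finset (Fin d → ℝ) := (P ×ˢ Q).image (fun pqr => -pqr.2 - pqr.1) with hbadW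
  obtain ⟨S'', t, ν, hsub'', hcard'', htbad, hν1, hnp⟩ :=
    geom_reduction S hconv (by omega) badW
  have htne : ∀ p ∈ P, ∀ q ∈ Q, p + t ≠ -q := by
    intro p hp q hq heq
    apply htbad
    have ht' : -q - p = t := by rw [← heq]; abel
    have hmm : ((p, q) : (Fin d → ℝ) × (Fin d → ℝ)) ∈ P ×ˢ Q := Finset.mem_product.2 ⟨hp, hq⟩
    rw [hbadW]
    exact Finset.mem_image.2 ⟨(p,q), hmm, ht'⟩
  -- representations
  have hrep : ∀ s : Fin d → ℝ, ∃ pqr : (Fin d → ℝ) × (Fin d → ℝ),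
      s ∈ S → (pqr.1 ∈ P ∧ pqr.2 ∈ Q ∧ pqr.1 + pqr.2 = s) := by
    intro s
    by_cases hs : s ∈ S
    · obtain ⟨p, hp, q, hq, hpq⟩ := Set.mem_add.1 (hsub (Finset.mem_coe.2 hs))
      exact ⟨(p,q), fun _ => ⟨hp, hq, hpq⟩⟩
    · exact ⟨(0,0), fun h => absurd h hs⟩
  choose pq hpq using hrep
  set g : (Fin d → ℝ) → (Fin d → ℝ) × (Fin d → ℝ) :=
    fun s => ((pq s).1 + t, -(pq s).2) with hg
  have hkey : ∀ s ∈ S, (g s).1 - (g s).2 = s + t := by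
    intro s hs
    show ((pq s).1 + t) - (-(pq s).2) = s + t
    calc ((pq s).1 + t) - (-(pq s).2) = ((pq s).1 + (pq s).2) + t := by abel
      _ = s + t := by rw [(hpq s hs).2.2]
  have hinjS : Set.InjOn g ↑S'' := by
    intro a ha b hb hab
    have ha' := hsub'' (Finset.mem_coe.1 ha)
    have hb' := hsub'' (Finset.mem_coe.1 hb)
    have h1 := hkey a ha'
    have h2 := hkey b hb'
    have : a + t = b + t := by rw [← h1, ← h2, hab]
    exact add_right_cancel this
  set T : Finset ((Fin d → ℝ) × (Fin d → ℝ)) := S''.image g with hT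
  have hTcard : T.card = S''.card := Finset.card_image_of_injOn hinjS
  -- ground set
  set V₁ : Finset (Fin d → ℝ) := P.image (fun p => p + t) ∪ Q.image (fun q => -q) with hV₁
  have hV₁card : V₁.card ≤ 2*n := by
    calc V₁.card ≤ (P.image (fun p => p + t)).card + (Q.image (fun q => -q)).card :=
          Finset.card_union_le _ _
      _ ≤ P.card + Q.card := add_le_add (Finset.card_image_le) (Finset.card_image_le)
      _ = 2*n := by rw [hP, hQ]; ring
  obtain ⟨V, hV₁V, hVcard⟩ := Infinite.exists_superset_card_eq V₁ (2*n) hV₁card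
  have hTV : ∀ e ∈ T, e.1 ∈ V ∧ e.2 ∈ V ∧ e.1 ≠ e.2 := by
    intro e he
    obtain ⟨s, hs, rfl⟩ := Finset.mem_image.1 he
    obtain ⟨hp, hq, _⟩ := hpq s (hsub'' hs)
    refine ⟨?_, ?_, ?_⟩
    · exact hV₁V (Finset.mem_union_left _ (Finset.mem_image_of_mem _ hp))
    · exact hV₁V (Finset.mem_union_right _ (Finset.mem_image_of_mem _ hq))
    · exact htne _ hp _ hq
  obtain ⟨R, hR, hle6⟩ := exists_half_subset V T n hn hVcard hTV
  rw [Finset.mem_powersetCard] at hR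
  set T' := T.filter (fun e => e.1 ∈ R ∧ e.2 ∈ R) with hT'
  have hT'T : T' ⊆ T := Finset.filter_subset _ _
  have hT'mem : ∀ e ∈ T', ∃ s ∈ S'', g s = e := by
    intro e he
    exact Finset.mem_image.1 (hT'T he)
  have hwit : T'.card ∈ Wset d n := by
    refine ⟨R, ν, T', hR.2, ?_, ?_, rfl⟩
    · intro e he
      obtain ⟨h1, h2⟩ := (Finset.mem_filter.1 he).2
      refine ⟨h1, h2, ?_⟩
      obtain ⟨s, hs, hgs⟩ := hT'mem e he
      have := hkey s (hsub'' hs)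
      rw [hgs] at this
      rw [this]
      exact hν1 s hs
    · intro e he f hf hef c
      obtain ⟨s, hs, hgs⟩ := hT'mem e he
      obtain ⟨r, hr, hgr⟩ := hT'mem f hf
      have hsr : s ≠ r := by
        intro h
        apply hef
        rw [← hgs, ← hgr, h]
      have h1 := hkey s (hsub'' hs)
      have h2 := hkey r (hsub'' hr)
      rw [hgs] at h1
      rw [hgr] at h2
      rw [h1, h2]
      exact hnp s hs r hr hsr c
  calc S.card ≤ 2 * S''.card := hcard''
    _ = 2 * T.card := by rw [hTcard]
    _ ≤ 2 * (6 * T'.card) := Nat.mul_le_mul_left _ hle6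
    _ = 12 * T'.card := by ring
    _ ≤ 12 * Wfun d n := Nat.mul_le_mul_left _ (le_Wfun hwit)

end WLower

/-- For every fixed `d ≥ 2`, the functions `E_d(n)`, `M_d(n,n)` and `W_d(n)` are
pairwise asymptotically equivalent: there are constants `c₁, c₂ > 0` with
`c₁·M_d(n,n) ≤ E_d(n) ≤ c₂·M_d(n,n)` and `c₁·M_d(n,n) ≤ W_d(n) ≤ c₂·M_d(n,n)`
for all `n ≥ 2`. -/
theorem asymptotically_equivalent (d : ℕ) (hd : 2 ≤ d) :
    ∃ c₁ c₂ : ℝ, 0 < c₁ ∧ 0 < c₂ ∧ ∀ n : ℕ, 2 ≤ n →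
      (c₁ * (Mfun d n n : ℝ) ≤ (Efun d n : ℝ) ∧ (Efun d n : ℝ) ≤ c₂ * (Mfun d n n : ℝ)) ∧
      (c₁ * (Mfun d n n : ℝ) ≤ (Wfun d n : ℝ) ∧ (Wfun d n : ℝ) ≤ c₂ * (Mfun d n n : ℝ)) := by
  refine ⟨1/12, 1, by norm_num, by norm_num, ?_⟩
  intro n hn
  have hd0 : 0 < d := by omega
  have h1 : (Mfun d n n : ℝ) ≤ 6 * Efun d n := by exact_mod_cast Mfun_le_6_Efun d n hd0 hn
  have h2 : (Efun d n : ℝ) ≤ Mfun d n n := by exact_mod_cast Efun_le_Mfun d n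
  have h3 : (Mfun d n n : ℝ) ≤ 12 * Wfun d n := by exact_mod_cast Mfun_le_12_Wfun d n hd0 hn
  have h4 : (Wfun d n : ℝ) ≤ Mfun d n n := by exact_mod_cast Wfun_le_Mfun d n
  have hE0 : (0:ℝ) ≤ Efun d n := Nat.cast_nonneg _
  have hW0 : (0:ℝ) ≤ Wfun d n := Nat.cast_nonneg _
  refine ⟨⟨?_, ?_⟩, ⟨?_, ?_⟩⟩
  · linarith
  · linarith
  · linarith
  · linarith
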